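/- Let G be a connected simple graph on N vertices with diameter D. Suppose there exists a symmetric, entrywise nonnegative, irreducible matrix M ∈ M(G) such that (I) M𝟙 = k𝟙 for some k ∈ ℝ, and (II) M has exactly D + 1 distinct eigenvalues. Then there exist D real matrices A^(1), …, A^(D), each in M(G), such that A^(D) · A^(D−1) ⋯ A^(1) = (1/N)·𝟙𝟙ᵀ. -/

import Mathlib

open Matrix

/-- A real `N × N` matrix complies with the graph `G` when its off-diagonal
entries vanish outside the edges of `G`. -/
def SimpleGraph.Complies {N : ℕ} (G : SimpleGraph (Fin N))
    (A : Matrix (Fin N) (Fin N) ℝ) : Prop :=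
  ∀ i j : Fin N, i ≠ j → ¬ G.Adj i j → A i j = 0

namespace ConsensusAux

variable {N : ℕ}

/-- applying a product of shifted matrices to an eigenvector -/
lemma prodg_mulVec (M : Matrix (Fin N) (Fin N) ℝ) (μ : ℝ) (v : Fin N → ℝ)
    (hv : M *ᵥ v = μ • v) :
    ∀ L : List ℝ,
      ((L.map (fun a => M - a • (1 : Matrix (Fin N) (Fin N) ℝ))).prod) *ᵥ v
        = (L.map (fun a => μ - a)).prod • v
  | [] => by simp
  | a :: L => by
    simp only [List.map_cons, List.prod_cons]
    rw [← Matrix.mulVec_mulVec, prodg_mulVec M μ v hv L, Matrix.mulVec_smul,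
      Matrix.sub_mulVec, hv, Matrix.smul_mulVec, Matrix.one_mulVec,
      ← sub_smul, smul_smul, mul_comm]

/-- a matrix is zero if it kills the eigenvector basis of a hermitian matrix -/
lemma eq_zero_of_kills_basis (M P : Matrix (Fin N) (Fin N) ℝ) (hH : M.IsHermitian)
    (h : ∀ j, P *ᵥ ⇑(hH.eigenvectorBasis j) = 0) : P = 0 := by
  have hv : ∀ v : EuclideanSpace ℝ (Fin N), P *ᵥ (v : Fin N → ℝ) = 0 := by
    intro v
    rw [← hH.eigenvectorBasis.sum_repr v]
    rw [WithLp.ofLp_sum]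
    simp only [WithLp.ofLp_smul]
    show P.mulVecLin (∑ i, hH.eigenvectorBasis.repr v i • (hH.eigenvectorBasis i : Fin N → ℝ)) = 0
    rw [map_sum]
    refine Finset.sum_eq_zero fun i _ => ?_
    show P.mulVecLin (hH.eigenvectorBasis.repr v i • (hH.eigenvectorBasis i : Fin N → ℝ)) = 0
    rw [_root_.map_smul]
    show hH.eigenvectorBasis.repr v i • (P *ᵥ ⇑(hH.eigenvectorBasis i)) = 0
    rw [h i, smul_zero]
  ext i j
  have := congrFun (hv (EuclideanSpace.single j 1)) i
  simpa [Matrix.mulVec, dotProduct, EuclideanSpace.single_apply] using this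

/-- annihilating polynomial -/
lemma annihilate (M : Matrix (Fin N) (Fin N) ℝ) (hH : M.IsHermitian) (L : List ℝ)
    (hL : ∀ j, hH.eigenvalues j ∈ L) :
    (L.map (fun a => M - a • (1 : Matrix (Fin N) (Fin N) ℝ))).prod = 0 := by
  apply eq_zero_of_kills_basis M _ hH
  intro j
  rw [prodg_mulVec M (hH.eigenvalues j) _ (hH.mulVec_eigenvectorBasis j)]
  have : (L.map (fun a => hH.eigenvalues j - a)).prod = 0 :=
    List.prod_eq_zero (List.mem_map.2 ⟨hH.eigenvalues j, hL j, sub_self _⟩)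
  rw [this, zero_smul]

lemma pow_nonneg (M : Matrix (Fin N) (Fin N) ℝ) (h : ∀ i j, 0 ≤ M i j) :
    ∀ m, ∀ i j, 0 ≤ (M ^ m) i j
  | 0 => by
    intro i j
    by_cases hij : i = j <;> simp [pow_zero, Matrix.one_apply, hij]
  | m + 1 => by
    intro i j
    rw [pow_succ, Matrix.mul_apply]
    exact Finset.sum_nonneg fun l _ => mul_nonneg (pow_nonneg M h m i l) (h l j)

/-- Perron-type uniqueness: any eigenvector for the eigenvalue `k` is constant. -/
lemma perron (M : Matrix (Fin N) (Fin N) ℝ) (hnonneg : ∀ i j, 0 ≤ M i j)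
    (hirr : ∀ i j : Fin N, ∃ m : ℕ, 1 ≤ m ∧ 0 < (M ^ m) i j) (k : ℝ)
    (hk : M.mulVec (fun _ => (1 : ℝ)) = k • (fun _ => (1 : ℝ)))
    (v : Fin N → ℝ) (hv : M *ᵥ v = k • v) (i₁ i₂ : Fin N) : v i₁ = v i₂ := by
  obtain ⟨i₀, -, hmax⟩ := Finset.exists_max_image Finset.univ v ⟨i₁, Finset.mem_univ _⟩
  set u : Fin N → ℝ := fun i => v i₀ - v i with hu
  have hu0 : ∀ i, 0 ≤ u i := fun i => sub_nonneg.2 (hmax i (Finset.mem_univ _))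
  have huv : M *ᵥ u = k • u := by
    have : u = v i₀ • (fun _ => (1 : ℝ)) - v := by
      funext i; simp [hu]
    rw [this, Matrix.mulVec_sub, Matrix.mulVec_smul, hk, hv, smul_sub, smul_smul, smul_smul,
      mul_comm]
  have hpow : ∀ m, (M ^ m) *ᵥ u = k ^ m • u := by
    intro m
    induction m with
    | zero => simp
    | succ m ih =>
      rw [pow_succ, ← Matrix.mulVec_mulVec, huv, Matrix.mulVec_smul, ih, smul_smul, pow_succ,
        mul_comm]
  have hzero : ∀ j, u j = 0 := by
    intro j
    by_contra hj
    have hjpos : 0 < u j := lt_of_le_of_ne (hu0 j) (Ne.symm hj)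
    obtain ⟨m, -, hpos⟩ := hirr i₀ j
    have h1 : ((M ^ m) *ᵥ u) i₀ = 0 := by
      rw [hpow]
      simp [hu]
    have h2 : 0 < ((M ^ m) *ᵥ u) i₀ := by
      rw [Matrix.mulVec, dotProduct]
      exact Finset.sum_pos'
        (fun l _ => mul_nonneg (pow_nonneg M hnonneg m i₀ l) (hu0 l))
        ⟨j, Finset.mem_univ _, mul_pos hpos hjpos⟩
    linarith
  have h1 := hzero i₁
  have h2 := hzero i₂
  simp only [hu, sub_eq_zero] at h1 h2
  rw [← h1, ← h2]

lemma prod_smul_map (M : Matrix (Fin N) (Fin N) ℝ) (c : ℝ → ℝ) (g : ℝ → Matrix (Fin N) (Fin N) ℝ) :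
    ∀ L : List ℝ, (L.map (fun a => c a • g a)).prod = (L.map c).prod • (L.map g).prod
  | [] => by simp
  | a :: L => by
    simp only [List.map_cons, List.prod_cons, prod_smul_map M c g L, smul_mul_assoc,
      mul_smul_comm, smul_smul]
    rw [mul_comm]

lemma prod_inv_mul (k : ℝ) : ∀ L : List ℝ, (∀ a ∈ L, k - a ≠ 0) →
    (L.map (fun a => (k - a)⁻¹)).prod * (L.map (fun a => k - a)).prod = 1
  | [] => by simp
  | a :: L => by
    intro h
    simp only [List.map_cons, List.prod_cons]
    have h1 : (k - a)⁻¹ * (k - a) = 1 := inv_mul_cancel₀ (h a (List.mem_cons_self))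
    have h2 := prod_inv_mul k L (fun b hb => h b (List.mem_cons_of_mem a hb))
    calc (k - a)⁻¹ * (L.map (fun a => (k - a)⁻¹)).prod * ((k - a) * (L.map (fun a => k - a)).prod)
        = ((k - a)⁻¹ * (k - a)) * ((L.map (fun a => (k - a)⁻¹)).prod * (L.map (fun a => k - a)).prod) := by ring
      _ = 1 := by rw [h1, h2, one_mul]

end ConsensusAux

/-- If a connected graph `G` of diameter `D` admits a symmetric, entrywise
nonnegative, irreducible compliant matrix `M` with `M𝟙 = k𝟙` and exactly
`D + 1` distinct eigenvalues, then average consensus on `G` is achievable with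
`D` compliant matrices. -/
theorem consensus_in_diam_steps_of_good_matrix {N : ℕ} (G : SimpleGraph (Fin N))
    (hG : G.Connected) (D : ℕ) (hD : G.diam = D)
    (M : Matrix (Fin N) (Fin N) ℝ) (hM : G.Complies M)
    (hsymm : M.IsSymm) (hnonneg : ∀ i j, 0 ≤ M i j)
    (hirr : ∀ i j : Fin N, ∃ m : ℕ, 1 ≤ m ∧ 0 < (M ^ m) i j)
    (k : ℝ) (hk : M.mulVec (fun _ => (1 : ℝ)) = k • (fun _ => (1 : ℝ)))
    (heig : {μ : ℝ | ∃ v : Fin N → ℝ, v ≠ 0 ∧ M.mulVec v = μ • v}.ncard = D + 1) :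
    ∃ A : Fin D → Matrix (Fin N) (Fin N) ℝ,
      (∀ t : Fin D, G.Complies (A t)) ∧
      (List.ofFn A).reverse.prod = Matrix.of (fun _ _ => (N : ℝ)⁻¹) := by
  classical
  obtain ⟨i₀⟩ : Nonempty (Fin N) := hG.nonempty
  have hN0 : (N : ℝ) ≠ 0 := Nat.cast_ne_zero.2 (Fin.pos i₀).ne'
  have hH : M.IsHermitian := by rwa [Matrix.IsHermitian, conjTranspose_eq_transpose_of_trivial]
  set S := {μ : ℝ | ∃ v : Fin N → ℝ, v ≠ 0 ∧ M.mulVec v = μ • v} with hSdef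
  set R : Finset ℝ := Finset.image hH.eigenvalues Finset.univ with hRdef
  -- the eigenvalue set is exactly the set of `hH.eigenvalues`
  have hSR : S = ↑R := by
    ext μ
    constructor
    · rintro ⟨v, hv0, hvμ⟩
      set L := R.toList with hL
      have hLmem : ∀ j, hH.eigenvalues j ∈ L :=
        fun j => Finset.mem_toList.2 (Finset.mem_image_of_mem _ (Finset.mem_univ j))
      have h0 := ConsensusAux.annihilate M hH L hLmem
      have h1 := ConsensusAux.prodg_mulVec M μ v hvμ L
      rw [h0, Matrix.zero_mulVec] at h1
      have hπ : (L.map (fun a => μ - a)).prod = 0 := by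
        by_contra hne
        exact hv0 ((smul_eq_zero.1 h1.symm).resolve_left hne)
      rw [List.prod_eq_zero_iff] at hπ
      obtain ⟨a, ha, ha0⟩ := List.mem_map.1 hπ
      rw [sub_eq_zero] at ha0
      rw [Finset.mem_coe, ← Finset.mem_toList, ← hL]
      exact ha0 ▸ ha
    · intro hμ
      obtain ⟨j, -, rfl⟩ := Finset.mem_image.1 (Finset.mem_coe.1 hμ)
      refine ⟨⇑(hH.eigenvectorBasis j), ?_, hH.mulVec_eigenvectorBasis j⟩
      have := hH.eigenvectorBasis.orthonormal.ne_zero j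
      intro h; apply this; ext i; exact congrFun h i
  have hRcard : R.card = D + 1 := by
    rw [← Set.ncard_coe_finset, ← hSR]
    exact heig
  -- `k` is an eigenvalue
  have hone_ne : (fun _ : Fin N => (1 : ℝ)) ≠ 0 := by
    intro h
    have := congrFun h i₀
    norm_num at this
  have hkS : k ∈ S := ⟨fun _ => 1, hone_ne, hk⟩
  have hkR : k ∈ R := by rwa [hSR, Finset.mem_coe] at hkS
  set s : Finset ℝ := R.erase k with hsdef
  have hscard : s.card = D := by
    rw [hsdef, Finset.card_erase_of_mem hkR, hRcard]
    rfl
  set l : List ℝ := s.toList with hldef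
  have hlen : l.length = D := by rw [hldef, Finset.length_toList, hscard]
  have hlmem : ∀ a ∈ l, a ∈ s := fun a ha => Finset.mem_toList.1 ha
  have hlne : ∀ a ∈ l, k - a ≠ 0 := by
    intro a ha
    exact sub_ne_zero.2 (Ne.symm (Finset.ne_of_mem_erase (hlmem a ha)))
  set g : ℝ → Matrix (Fin N) (Fin N) ℝ := fun a => M - a • 1 with hgdef
  set Q : Matrix (Fin N) (Fin N) ℝ := (l.map g).prod with hQdef
  -- (M - k•1) * Q = 0
  have hannihilate : g k * Q = 0 := by
    have hmem : ∀ j, hH.eigenvalues j ∈ k :: l := by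
      intro j
      have hj : hH.eigenvalues j ∈ R := Finset.mem_image_of_mem _ (Finset.mem_univ j)
      by_cases hjk : hH.eigenvalues j = k
      · exact hjk ▸ List.mem_cons_self
      · exact List.mem_cons_of_mem _ (Finset.mem_toList.2 (Finset.mem_erase.2 ⟨hjk, hj⟩))
    have := ConsensusAux.annihilate M hH (k :: l) hmem
    rwa [List.map_cons, List.prod_cons] at this
  have hMQ : M * Q = k • Q := by
    have h := hannihilate
    rw [hgdef] at h
    simp only at h
    rwa [Matrix.sub_mul, smul_mul_assoc, one_mul, sub_eq_zero] at h
  -- Q commutes with M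
  have hcommM : ∀ a : ℝ, Commute (g a) M := by
    intro a
    rw [hgdef]
    exact (Commute.refl M).sub_left ((Commute.one_left M).smul_left a)
  have hQMcomm : Commute Q M :=
    Commute.list_prod_left _ _ (fun x hx => by
      obtain ⟨a, -, rfl⟩ := List.mem_map.1 hx
      exact hcommM a)
  have hQM : Q * M = k • Q := by rw [hQMcomm.eq, hMQ]
  -- columns of Q are constant
  have hQij : ∀ i j, Q i j = Q i₀ i₀ := by
    have hcols : ∀ j i i', Q i j = Q i' j := by
      intro j i i'
      have hv : M *ᵥ (fun i => Q i j) = k • (fun i => Q i j) := by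
        funext i
        have h1 : (M *ᵥ fun i => Q i j) i = (M * Q) i j := by
          simp [Matrix.mulVec, dotProduct, Matrix.mul_apply]
        rw [h1, hMQ]
        simp
      exact ConsensusAux.perron M hnonneg hirr k hk _ hv i i'
    have hrows : ∀ i j j', Q i j = Q i j' := by
      intro i j j'
      have hv : M *ᵥ (fun j => Q i j) = k • (fun j => Q i j) := by
        funext j
        have h1 : (M *ᵥ fun j => Q i j) j = (Q * M) i j := by
          simp only [Matrix.mulVec, dotProduct, Matrix.mul_apply]
          refine Finset.sum_congr rfl fun l _ => ?_
          rw [mul_comm]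
          congr 1
          conv_lhs => rw [← hsymm]
          rfl
        rw [h1, hQM]
        simp
      exact ConsensusAux.perron M hnonneg hirr k hk _ hv j j'
    intro i j
    rw [hcols j i i₀, hrows i₀ j i₀]
  -- value of the constant
  set πk : ℝ := (l.map (fun a => k - a)).prod with hπkdef
  have hQ1 : Q *ᵥ (fun _ => (1 : ℝ)) = πk • (fun _ => (1 : ℝ)) :=
    ConsensusAux.prodg_mulVec M k _ hk l
  have hNr : (N : ℝ) * Q i₀ i₀ = πk := by
    have := congrFun hQ1 i₀
    simp only [Matrix.mulVec, dotProduct, mul_one, Pi.smul_apply, smul_eq_mul] at this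
    calc (N : ℝ) * Q i₀ i₀ = ∑ j : Fin N, Q i₀ j := by
          rw [Finset.sum_congr rfl (fun j _ => hQij i₀ j), Finset.sum_const, Finset.card_univ,
            Fintype.card_fin, nsmul_eq_mul]
      _ = πk := this
  set πinv : ℝ := (l.map (fun a => (k - a)⁻¹)).prod with hπinvdef
  have hππ : πinv * πk = 1 := ConsensusAux.prod_inv_mul k l hlne
  -- the final matrices
  set f : ℝ → Matrix (Fin N) (Fin N) ℝ := fun a => (k - a)⁻¹ • g a with hfdef
  have hprod_f : (l.map f).prod = Matrix.of (fun _ _ => (N : ℝ)⁻¹) := by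
    rw [hfdef]
    have h1 : (l.map fun a => (k - a)⁻¹ • g a).prod = πinv • Q :=
      ConsensusAux.prod_smul_map M _ g l
    rw [h1]
    ext i j
    simp only [Matrix.smul_apply, smul_eq_mul, Matrix.of_apply]
    rw [hQij i j]
    have hQr : Q i₀ i₀ = πk * (N : ℝ)⁻¹ := by
      field_simp
      linarith [hNr]
    rw [hQr, ← mul_assoc, hππ, one_mul]
  -- the matrices commute pairwise
  have hfcomm : ∀ a b : ℝ, Commute (f a) (f b) := by
    intro a b
    have : Commute (g a) (g b) := by
      rw [hgdef]
      exact ((Commute.refl M).sub_right ((Commute.one_right M).smul_right b)).sub_left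
        (((Commute.one_left M).sub_right ((Commute.one_right (1 : Matrix (Fin N) (Fin N) ℝ)).smul_right b)).smul_left a)
    exact (this.smul_left _).smul_right _
  refine ⟨fun t => f (l.get (Fin.cast hlen.symm t)), ?_, ?_⟩
  · intro t i j hij hadj
    simp only [hfdef, hgdef, Matrix.smul_apply, Matrix.sub_apply, Matrix.smul_apply,
      Matrix.one_apply_ne hij, hM i j hij hadj, smul_eq_mul]
    ring
  · have hofn : List.ofFn (fun t => f (l.get (Fin.cast hlen.symm t))) = l.map f := by
      apply List.ext_getElem
      · simp [hlen]
      · intro n h1 h2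
        simp [List.getElem_ofFn, List.getElem_map]
    rw [hofn, ← hprod_f]
    refine List.Perm.prod_eq' (List.reverse_perm _) ?_
    rw [List.pairwise_reverse]
    refine List.pairwise_of_forall_mem_list fun x hx y hy => ?_
    obtain ⟨a, -, rfl⟩ := List.mem_map.1 hx
    obtain ⟨b, -, rfl⟩ := List.mem_map.1 hy
    exact hfcomm b a
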